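/- For every real number x > 0, tanh(x) < x(15 + x^2)/(15 + 6x^2). -/

import Mathlib

open Real

private lemma pos_of_deriv_pos (f f' : ℝ → ℝ) (hd : ∀ x, HasDerivAt f (f' x) x)
    (h0 : f 0 = 0) (hp : ∀ x > 0, 0 < f' x) : ∀ x > 0, 0 < f x := by
  intro x hx
  have hmono : StrictMonoOn f (Set.Ici 0) := by
    refine StrictMonoOn.mono ?_ (le_refl _)
    refine strictMonoOn_of_deriv_pos (convex_Ici 0)
      (fun y _ => (hd y).continuousAt.continuousWithinAt) ?_
    intro y hy
    rw [interior_Ici] at hy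
    rw [(hd y).deriv]
    exact hp y hy
  have := hmono Set.self_mem_Ici (Set.mem_Ici.mpr hx.le) hx
  rw [h0] at this
  exact this

private lemma hexp (x : ℝ) : HasDerivAt (fun x : ℝ => Real.exp (2 * x)) (2 * Real.exp (2 * x)) x := by
  have := HasDerivAt.exp ((hasDerivAt_id x).const_mul 2)
  simpa [mul_comm] using this

private lemma F3_pos : ∀ x > (0:ℝ), 0 < 6 - Real.exp (2*x) * (-8*x^3 + 12*x^2 - 12*x + 6) := by
  refine pos_of_deriv_pos _ (fun x => 16 * x^3 * Real.exp (2*x)) ?_ (by norm_num) ?_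
  · intro x
    have hp : HasDerivAt (fun x : ℝ => -8*x^3 + 12*x^2 - 12*x + 6)
        (-8*(3*x^2) + 12*(2*x) - 12) x := by
      have h3 := (hasDerivAt_pow 3 x).const_mul (-8 : ℝ)
      have h2 := (hasDerivAt_pow 2 x).const_mul (12 : ℝ)
      have h1 := (hasDerivAt_id x).const_mul (12 : ℝ)
      have := ((h3.add h2).sub h1).add_const (6:ℝ)
      refine this.congr_deriv ?_
      push_cast
      ring
    have := (hasDerivAt_const x (6:ℝ)).sub ((hexp x).mul hp)
    refine this.congr_deriv ?_
    ring
  · intro x hx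
    positivity

private lemma F2_pos : ∀ x > (0:ℝ),
    0 < 6*x + 12 - Real.exp (2*x) * (-4*x^3 + 12*x^2 - 18*x + 12) := by
  refine pos_of_deriv_pos _
    (fun x => 6 - Real.exp (2*x) * (-8*x^3 + 12*x^2 - 12*x + 6)) ?_ (by norm_num) F3_pos
  intro x
  have hp : HasDerivAt (fun x : ℝ => -4*x^3 + 12*x^2 - 18*x + 12)
      (-4*(3*x^2) + 12*(2*x) - 18) x := by
    have h3 := (hasDerivAt_pow 3 x).const_mul (-4 : ℝ)
    have h2 := (hasDerivAt_pow 2 x).const_mul (12 : ℝ)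
    have h1 := (hasDerivAt_id x).const_mul (18 : ℝ)
    have := ((h3.add h2).sub h1).add_const (12:ℝ)
    refine this.congr_deriv ?_
    push_cast
    ring
  have hl : HasDerivAt (fun x : ℝ => 6*x + 12) 6 x := by
    have := ((hasDerivAt_id x).const_mul (6:ℝ)).add_const (12:ℝ)
    simpa using this
  have := hl.sub ((hexp x).mul hp)
  refine this.congr_deriv ?_
  ring

private lemma F1_pos : ∀ x > (0:ℝ),
    0 < 3*x^2 + 12*x + 15 - Real.exp (2*x) * (-2*x^3 + 9*x^2 - 18*x + 15) := by
  refine pos_of_deriv_pos _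
    (fun x => 6*x + 12 - Real.exp (2*x) * (-4*x^3 + 12*x^2 - 18*x + 12)) ?_ (by norm_num) F2_pos
  intro x
  have hp : HasDerivAt (fun x : ℝ => -2*x^3 + 9*x^2 - 18*x + 15)
      (-2*(3*x^2) + 9*(2*x) - 18) x := by
    have h3 := (hasDerivAt_pow 3 x).const_mul (-2 : ℝ)
    have h2 := (hasDerivAt_pow 2 x).const_mul (9 : ℝ)
    have h1 := (hasDerivAt_id x).const_mul (18 : ℝ)
    have := ((h3.add h2).sub h1).add_const (15:ℝ)
    refine this.congr_deriv ?_
    push_cast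
    ring
  have hl : HasDerivAt (fun x : ℝ => 3*x^2 + 12*x + 15) (3*(2*x) + 12) x := by
    have h2 := (hasDerivAt_pow 2 x).const_mul (3 : ℝ)
    have h1 := (hasDerivAt_id x).const_mul (12 : ℝ)
    have := (h2.add h1).add_const (15:ℝ)
    refine this.congr_deriv ?_
    push_cast
    ring
  have := hl.sub ((hexp x).mul hp)
  refine this.congr_deriv ?_
  ring

private lemma F0_pos : ∀ x > (0:ℝ),
    0 < x^3 + 6*x^2 + 15*x + 15 - Real.exp (2*x) * (15 + 6*x^2 - 15*x - x^3) := by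
  refine pos_of_deriv_pos _
    (fun x => 3*x^2 + 12*x + 15 - Real.exp (2*x) * (-2*x^3 + 9*x^2 - 18*x + 15)) ?_
    (by norm_num) F1_pos
  intro x
  have hp : HasDerivAt (fun x : ℝ => 15 + 6*x^2 - 15*x - x^3)
      (6*(2*x) - 15 - 3*x^2) x := by
    have h2 := ((hasDerivAt_pow 2 x).const_mul (6 : ℝ)).const_add (15:ℝ)
    have h1 := (hasDerivAt_id x).const_mul (15 : ℝ)
    have h3 := hasDerivAt_pow 3 x
    have := (h2.sub h1).sub h3
    refine this.congr_deriv ?_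
    push_cast
    ring
  have hl : HasDerivAt (fun x : ℝ => x^3 + 6*x^2 + 15*x + 15) (3*x^2 + 6*(2*x) + 15) x := by
    have h3 := hasDerivAt_pow 3 x
    have h2 := (hasDerivAt_pow 2 x).const_mul (6 : ℝ)
    have h1 := (hasDerivAt_id x).const_mul (15 : ℝ)
    have := ((h3.add h2).add h1).add_const (15:ℝ)
    refine this.congr_deriv ?_
    push_cast
    ring
  have := hl.sub ((hexp x).mul hp)
  refine this.congr_deriv ?_
  ring

theorem stmt_0 : ∀ x : ℝ, 0 < x →
    Real.tanh x < x * (15 + x ^ 2) / (15 + 6 * x ^ 2) := by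
  intro x hx
  have hF := F0_pos x hx
  have hE : Real.exp x * Real.exp (-x) = 1 := by
    rw [← Real.exp_add]; simp
  have h2x : Real.exp (2*x) = Real.exp x ^ 2 := by
    rw [two_mul, Real.exp_add]; ring
  rw [h2x] at hF
  have hEpos := Real.exp_pos x
  have hEneg := Real.exp_pos (-x)
  rw [Real.tanh_eq_sinh_div_cosh, div_lt_div_iff₀ (Real.cosh_pos x) (by positivity)]
  rw [Real.sinh_eq, Real.cosh_eq]
  have key : (Real.exp x ^ 2 - 1) * (15 + 6*x^2) < x * (15 + x^2) * (Real.exp x ^ 2 + 1) := by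
    nlinarith [hF]
  rw [Real.exp_neg]
  have e1 : (Real.exp x - (Real.exp x)⁻¹)/2 * (15+6*x^2)
      = ((Real.exp x ^ 2 - 1)*(15+6*x^2)) / (2*Real.exp x) := by
    field_simp
  have e2 : x*(15+x^2)*((Real.exp x + (Real.exp x)⁻¹)/2)
      = (x*(15+x^2)*(Real.exp x ^ 2 + 1)) / (2*Real.exp x) := by
    field_simp
  rw [e1, e2, div_lt_div_iff₀ (by positivity) (by positivity)]
  nlinarith [key, hEpos]
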